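/- Let r ≥ 1 and let (α_1, …, α_r) and (β_1, …, β_r) be residual r-tuples. Then (α_1, …, α_r) <_c (β_1, …, β_r) in the co-lexicographic order if and only if ∑_{j=1}^{r} α_j·s_j < ∑_{j=1}^{r} β_j·s_j. -/
import Mathlib


/-- A residual `r`-tuple `(α_1, …, α_r)` (here `α i` encodes `α_{i+1}`):
`0 ≤ α_i ≤ a` for all `i`, and if `α_i = a` for some `i ∈ {2, …, r}`, then
`α_j = 0` for all `j < i`. -/
def IsResidual (a : ℕ) {r : ℕ} (α : Fin r → ℕ) : Prop :=
  (∀ i, α i ≤ a) ∧ ∀ i j : Fin r, α i = a → 1 ≤ (i : ℕ) → j < i → α j = 0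

/-- The strict co-lexicographic order: `α <_c β` iff there is an index `t` with
`α_t < β_t` and `α_j = β_j` for all `j > t`. -/
def ColexLt {r : ℕ} (α β : Fin r → ℕ) : Prop :=
  ∃ t : Fin r, α t < β t ∧ ∀ j : Fin r, t < j → α j = β j

/-- Partial sums of a residual tuple are dominated by the next `s`-value. -/
lemma residual_partial_lt {a : ℕ} (ha : 2 ≤ a) (s : ℕ → ℕ) (hpos : ∀ j, 0 < s j)
    (hstep : ∀ j, a * s j < s (j + 1)) {r : ℕ} (α : Fin r → ℕ)
    (hα : IsResidual a α) :
    ∀ t : ℕ, t ≤ r →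
      (∑ j : Fin r, if (j : ℕ) < t then α j * s ((j : ℕ) + 1) else 0) < s (t + 1) := by
  intro t
  induction t with
  | zero => intro _; simpa using hpos 1
  | succ t ih =>
    intro htr
    have ht : t < r := htr
    have heqsum : (∑ j : Fin r, if (j : ℕ) = t then α j * s ((j : ℕ) + 1) else 0)
        = α ⟨t, ht⟩ * s (t + 1) := by
      rw [Finset.sum_eq_single_of_mem (⟨t, ht⟩ : Fin r) (Finset.mem_univ _)
        (fun b _ hb => if_neg (fun hc => hb (Fin.ext hc)))]
      simp
    have hsplit : (∑ j : Fin r, if (j : ℕ) < t + 1 then α j * s ((j : ℕ) + 1) else 0)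
        = (∑ j : Fin r, if (j : ℕ) < t then α j * s ((j : ℕ) + 1) else 0)
          + α ⟨t, ht⟩ * s (t + 1) := by
      rw [← heqsum, ← Finset.sum_add_distrib]
      refine Finset.sum_congr rfl fun j _ => ?_
      split_ifs <;> omega
    rw [hsplit]
    by_cases haa : α ⟨t, ht⟩ = a
    · have hzero : (∑ j : Fin r, if (j : ℕ) < t then α j * s ((j : ℕ) + 1) else 0) = 0 := by
        rcases Nat.eq_zero_or_pos t with h0 | h1
        · subst h0; simp
        · refine Finset.sum_eq_zero fun j _ => ?_
          split_ifs with h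
          · rw [hα.2 ⟨t, ht⟩ j haa h1 h, zero_mul]
          · rfl
      rw [hzero, zero_add, haa]
      exact hstep (t + 1)
    · have h1 : α ⟨t, ht⟩ ≤ a - 1 := by have := hα.1 ⟨t, ht⟩; omega
      have hmul : α ⟨t, ht⟩ * s (t + 1) ≤ (a - 1) * s (t + 1) :=
        Nat.mul_le_mul_right _ h1
      have hcomb : s (t + 1) + (a - 1) * s (t + 1) = a * s (t + 1) := by
        obtain ⟨k, hk⟩ : ∃ k, a = k + 1 := ⟨a - 1, by omega⟩
        subst hk
        simp [Nat.add_sub_cancel, add_mul, one_mul, add_comm]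
      calc (∑ j : Fin r, if (j : ℕ) < t then α j * s ((j : ℕ) + 1) else 0)
            + α ⟨t, ht⟩ * s (t + 1)
          < s (t + 1) + (a - 1) * s (t + 1) :=
            Nat.add_lt_add_of_lt_of_le (ih (le_of_lt ht)) hmul
        _ = a * s (t + 1) := hcomb
        _ < s (t + 2) := hstep (t + 1)

lemma colex_sum_lt {a : ℕ} (ha : 2 ≤ a) (s : ℕ → ℕ) (hpos : ∀ j, 0 < s j)
    (hstep : ∀ j, a * s j < s (j + 1)) {r : ℕ} (α β : Fin r → ℕ)
    (hα : IsResidual a α) (h : ColexLt α β) :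
    ∑ i : Fin r, α i * s ((i : ℕ) + 1) < ∑ i : Fin r, β i * s ((i : ℕ) + 1) := by
  obtain ⟨t, hlt, hall⟩ := h
  have hsplit : ∀ f : Fin r → ℕ,
      ∑ j : Fin r, f j = (∑ j : Fin r, if (j : ℕ) < (t : ℕ) then f j else 0) + f t
        + (∑ j : Fin r, if (t : ℕ) < (j : ℕ) then f j else 0) := by
    intro f
    have h1 : (∑ j : Fin r, if (j : ℕ) = (t : ℕ) then f j else 0) = f t := by
      rw [Finset.sum_eq_single_of_mem t (Finset.mem_univ _)
        (fun b _ hb => if_neg (fun hc => hb (Fin.ext hc)))]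
      simp
    rw [← h1, ← Finset.sum_add_distrib, ← Finset.sum_add_distrib]
    refine Finset.sum_congr rfl fun j _ => ?_
    split_ifs <;> omega
  rw [hsplit (fun j => α j * s ((j : ℕ) + 1)), hsplit (fun j => β j * s ((j : ℕ) + 1))]
  have htail : (∑ j : Fin r, if (t : ℕ) < (j : ℕ) then α j * s ((j : ℕ) + 1) else 0)
      = ∑ j : Fin r, if (t : ℕ) < (j : ℕ) then β j * s ((j : ℕ) + 1) else 0 := by
    refine Finset.sum_congr rfl fun j _ => ?_
    split_ifs with h
    · rw [hall j h]
    · rfl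
  have hhead : (∑ j : Fin r, if (j : ℕ) < (t : ℕ) then α j * s ((j : ℕ) + 1) else 0)
      < s ((t : ℕ) + 1) :=
    residual_partial_lt ha s hpos hstep α hα (t : ℕ) (le_of_lt t.isLt)
  have hmid : s ((t : ℕ) + 1) + α t * s ((t : ℕ) + 1) ≤ β t * s ((t : ℕ) + 1) := by
    have : (1 + α t) * s ((t : ℕ) + 1) ≤ β t * s ((t : ℕ) + 1) :=
      Nat.mul_le_mul_right _ (by omega)
    rwa [add_mul, one_mul] at this
  rw [htail]
  have h2 : (∑ j : Fin r, if (j : ℕ) < (t : ℕ) then α j * s ((j : ℕ) + 1) else 0)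
      + α t * s ((t : ℕ) + 1) < β t * s ((t : ℕ) + 1) := by
    calc _ < s ((t : ℕ) + 1) + α t * s ((t : ℕ) + 1) :=
          Nat.add_lt_add_right hhead _
      _ ≤ β t * s ((t : ℕ) + 1) := hmid
  have h3 : β t * s ((t : ℕ) + 1)
      ≤ (∑ j : Fin r, if (j : ℕ) < (t : ℕ) then β j * s ((j : ℕ) + 1) else 0)
        + β t * s ((t : ℕ) + 1) := Nat.le_add_left _ _
  omega

/-- for residual `r`-tuples `(α_1, …, α_r)` and `(β_1, …, β_r)`,
`(α_1, …, α_r) <_c (β_1, …, β_r)` iff `∑_{j=1}^{r} α_j·s_j < ∑_{j=1}^{r} β_j·s_j`. -/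
theorem stmt_16 (a c d n : ℕ) (ha : 2 ≤ a) (hc : 0 < c) (hd : 0 < d)
    (hdca : d < c * a) (hda : Nat.Coprime d a) (hdc : Nat.Coprime d c) (hn : 0 < n)
    (s : ℕ → ℕ) (hs : ∀ j, s j = c * a ^ (n + j) - d)
    (r : ℕ) (hr : 0 < r) (α β : Fin r → ℕ)
    (hα : IsResidual a α) (hβ : IsResidual a β) :
    ColexLt α β ↔
      ∑ i : Fin r, α i * s ((i : ℕ) + 1) < ∑ i : Fin r, β i * s ((i : ℕ) + 1) := by
  have hle : ∀ j : ℕ, d ≤ c * a ^ (n + j) := by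
    intro j
    calc d ≤ c * a := le_of_lt hdca
      _ = c * a ^ 1 := by rw [pow_one]
      _ ≤ c * a ^ (n + j) := Nat.mul_le_mul_left c
          (Nat.pow_le_pow_right (by omega) (by omega))
  have hpos : ∀ j, 0 < s j := by
    intro j
    rw [hs j]
    have : d < c * a ^ (n + j) := by
      calc d < c * a := hdca
        _ = c * a ^ 1 := by rw [pow_one]
        _ ≤ c * a ^ (n + j) := Nat.mul_le_mul_left c
            (Nat.pow_le_pow_right (by omega) (by omega))
    omega
  have hstep : ∀ j, a * s j < s (j + 1) := by
    intro j
    rw [hs j, hs (j + 1)]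
    have hA : c * a ^ (n + (j + 1)) = a * (c * a ^ (n + j)) := by ring
    rw [hA, Nat.mul_sub a (c * a ^ (n + j)) d]
    have h1 : a * d ≤ a * (c * a ^ (n + j)) := Nat.mul_le_mul_left a (hle j)
    have h2 : d < a * d := by
      calc d = 1 * d := (one_mul d).symm
        _ < a * d := (Nat.mul_lt_mul_right hd).mpr (by omega)
    omega
  constructor
  · exact colex_sum_lt ha s hpos hstep α β hα
  · intro hsum
    rcases eq_or_ne α β with heq | hne
    · subst heq; exact absurd hsum (lt_irrefl _)
    · have hDne : (Finset.univ.filter (fun j : Fin r => α j ≠ β j)).Nonempty := by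
        rcases Function.ne_iff.mp hne with ⟨j, hj⟩
        exact ⟨j, Finset.mem_filter.mpr ⟨Finset.mem_univ _, hj⟩⟩
      set D := Finset.univ.filter (fun j : Fin r => α j ≠ β j) with hD
      set t := D.max' hDne with htdef
      have htD : t ∈ D := D.max'_mem hDne
      have htne : α t ≠ β t := (Finset.mem_filter.mp htD).2
      have hall : ∀ j : Fin r, t < j → α j = β j := by
        intro j hj
        by_contra hcon
        have : j ∈ D := Finset.mem_filter.mpr ⟨Finset.mem_univ _, hcon⟩
        exact absurd (D.le_max' j this) (not_le.mpr hj)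
      rcases lt_or_gt_of_ne htne with h | h
      · exact ⟨t, h, hall⟩
      · have : ∑ i : Fin r, β i * s ((i : ℕ) + 1) < ∑ i : Fin r, α i * s ((i : ℕ) + 1) :=
          colex_sum_lt ha s hpos hstep β α hβ ⟨t, h, fun j hj => (hall j hj).symm⟩
        omega
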